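/- arXiv:2010.02000 — 4 statements merged into one kernel-verified Lean document; each statement's English description precedes it below -/
import Mathlib

section
/- Let q > 1 and let f : ℝ → ℝ be continuous with f(0) = 0, such that the map u ↦ f(u)/|u|^{q-1} is nondecreasing on (0, +∞). Then for every u > 0, q·F(u) ≤ f(u)·u, where F(u) = ∫₀ᵘ f(s) ds. -/
open intervalIntegral

theorem stmt0 (q : ℝ) (hq : 1 < q) (f : ℝ → ℝ) (hf : Continuous f) (hf0 : f 0 = 0)
    (hmono : ∀ a b : ℝ, 0 < a → a ≤ b → f a / a ^ (q - 1) ≤ f b / b ^ (q - 1)) :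
    ∀ u : ℝ, 0 < u → q * ∫ s in (0:ℝ)..u, f s ≤ f u * u := by
  intro u hu
  have hq0 : (0:ℝ) < q - 1 := by linarith
  have hqpos : (0:ℝ) < q := by linarith
  set c := f u / u ^ (q - 1) with hc
  -- pointwise bound
  have hle : ∀ s ∈ Set.Icc (0:ℝ) u, f s ≤ c * s ^ (q - 1) := by
    intro s hs
    rcases eq_or_lt_of_le hs.1 with h0 | h0
    · rw [← h0, Real.zero_rpow (ne_of_gt hq0), mul_zero, hf0]
    · have hsp : (0:ℝ) < s ^ (q - 1) := Real.rpow_pos_of_pos h0 _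
      have := hmono s u h0 hs.2
      rw [div_le_div_iff₀ hsp (Real.rpow_pos_of_pos hu _)] at this
      rw [hc, div_mul_eq_mul_div, le_div_iff₀ (Real.rpow_pos_of_pos hu _)]
      linarith [this]
  have hintf : IntervalIntegrable f MeasureTheory.volume 0 u := hf.intervalIntegrable _ _
  have hintg : IntervalIntegrable (fun s => c * s ^ (q - 1)) MeasureTheory.volume 0 u :=
    (intervalIntegral.intervalIntegrable_rpow (Or.inl hq0.le)).const_mul c
  have hmono' : ∫ s in (0:ℝ)..u, f s ≤ ∫ s in (0:ℝ)..u, c * s ^ (q - 1) :=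
    intervalIntegral.integral_mono_on hu.le hintf hintg hle
  have hcalc : ∫ s in (0:ℝ)..u, c * s ^ (q - 1) = c * (u ^ q / q) := by
    rw [intervalIntegral.integral_const_mul, integral_rpow (Or.inl (by linarith : (-1:ℝ) < q - 1))]
    have h1 : q - 1 + 1 = q := by ring
    rw [h1, Real.zero_rpow (ne_of_gt hqpos), sub_zero]
  have hfin : q * (c * (u ^ q / q)) = f u * u := by
    rw [hc]
    field_simp
    rw [Real.rpow_sub hu, Real.rpow_one]
    field_simp
  calc q * ∫ s in (0:ℝ)..u, f s ≤ q * (c * (u ^ q / q)) := by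
        rw [← hcalc]; exact mul_le_mul_of_nonneg_left (hmono'.trans_eq rfl) hqpos.le
    _ = f u * u := hfin
end

section
/- Let q > 1 and let g : ℝ → ℝ be continuous with g(0) = 0, such that the map u ↦ g(u)/|u|^{q-1} is nonincreasing on (0, +∞). Then for every u > 0, q·G(u) ≥ g(u)·u, where G(u) = ∫₀ᵘ g(s) ds. -/
open intervalIntegral

theorem stmt1 (q : ℝ) (hq : 1 < q) (g : ℝ → ℝ) (hg : Continuous g) (hg0 : g 0 = 0)
    (hmono : ∀ a b : ℝ, 0 < a → a ≤ b → g b / b ^ (q - 1) ≤ g a / a ^ (q - 1)) :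
    ∀ u : ℝ, 0 < u → g u * u ≤ q * ∫ s in (0:ℝ)..u, g s := by
  intro u hu
  have hq1 : (0:ℝ) < q - 1 := by linarith
  have hupos : (0:ℝ) < u ^ (q - 1) := Real.rpow_pos_of_pos hu _
  set c := g u / u ^ (q - 1) with hc
  have hcont : Continuous fun s : ℝ => s ^ (q - 1) :=
    continuous_iff_continuousAt.mpr fun x =>
      Real.continuousAt_rpow_const x _ (Or.inr (le_of_lt hq1))
  have hpt : ∀ s ∈ Set.Icc (0:ℝ) u, c * s ^ (q - 1) ≤ g s := by
    intro s hs
    rcases eq_or_lt_of_le hs.1 with h0 | h0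
    · rw [← h0, Real.zero_rpow (ne_of_gt hq1), mul_zero, hg0]
    · have := hmono s u h0 hs.2
      have hsp : (0:ℝ) < s ^ (q - 1) := Real.rpow_pos_of_pos h0 _
      have := mul_le_mul_of_nonneg_right this (le_of_lt hsp)
      calc c * s ^ (q - 1) ≤ g s / s ^ (q - 1) * s ^ (q - 1) := this
        _ = g s := div_mul_cancel₀ _ (ne_of_gt hsp)
  have hint1 : IntervalIntegrable (fun s : ℝ => c * s ^ (q - 1)) MeasureTheory.volume 0 u :=
    (continuous_const.mul hcont).intervalIntegrable _ _
  have hint2 : IntervalIntegrable g MeasureTheory.volume 0 u := hg.intervalIntegrable _ _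
  have hmonoI : ∫ s in (0:ℝ)..u, c * s ^ (q - 1) ≤ ∫ s in (0:ℝ)..u, g s :=
    intervalIntegral.integral_mono_on (le_of_lt hu) hint1 hint2 hpt
  have hrpow : ∫ s in (0:ℝ)..u, s ^ (q - 1) = u ^ q / q := by
    rw [integral_rpow (Or.inl (by linarith))]
    rw [Real.zero_rpow (by positivity)]
    ring_nf
  have hcalc : (∫ s in (0:ℝ)..u, c * s ^ (q - 1)) = g u * u / q := by
    rw [intervalIntegral.integral_const_mul, hrpow, hc]
    have huq : u ^ q = u ^ (q - 1) * u := by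
      rw [← Real.rpow_add_one (ne_of_gt hu)]; ring_nf
    rw [huq]
    field_simp
  rw [hcalc] at hmonoI
  have := mul_le_mul_of_nonneg_left hmonoI (le_of_lt (by linarith : (0:ℝ) < q))
  calc g u * u = q * (g u * u / q) := by field_simp
    _ ≤ q * ∫ s in (0:ℝ)..u, g s := this
end

section
/- Let f, g : ℝ → ℝ be continuous with f(0)=g(0)=0, q > 2, u ↦ f(u)/u^{q-1} nondecreasing on (0,∞) and u ↦ g(u)/u^{q-1} nonincreasing on (0,∞). Fix u > 0 with f(u)u > g(u)u, and define φ(t) := ((t²-1)/2)(f(u)-g(u))u − (F(tu)−G(tu)) + (F(u)−G(u)) for t > 0, where F, G are the primitives vanishing at 0. Then φ(t) ≤ 0 for all t > 0, with φ(1) = 0. -/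
open intervalIntegral Set

theorem stmt12 (q : ℝ) (hq : 2 < q) (f g : ℝ → ℝ) (hf : Continuous f) (hg : Continuous g)
    (hf0 : f 0 = 0) (hg0 : g 0 = 0)
    (hfmono : ∀ a b : ℝ, 0 < a → a ≤ b → f a / a ^ (q - 1) ≤ f b / b ^ (q - 1))
    (hgmono : ∀ a b : ℝ, 0 < a → a ≤ b → g b / b ^ (q - 1) ≤ g a / a ^ (q - 1))
    (u : ℝ) (hu : 0 < u) (hNehari : g u * u < f u * u) :
    let F : ℝ → ℝ := fun s => ∫ τ in (0:ℝ)..s, f τ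
    let G : ℝ → ℝ := fun s => ∫ τ in (0:ℝ)..s, g τ
    let φ : ℝ → ℝ := fun t =>
      ((t ^ 2 - 1) / 2) * ((f u - g u) * u) - (F (t * u) - G (t * u)) + (F u - G u)
    φ 1 = 0 ∧ ∀ t > 0, φ t ≤ 0 := by
  intro F G φ
  have hc : 0 < f u - g u := by nlinarith
  have hup : 0 < u ^ (q - 1) := Real.rpow_pos_of_pos hu _
  -- pointwise rpow inequalities
  have pow_f : ∀ s : ℝ, 1 ≤ s → f u * s ^ (q - 1) ≤ f (s * u) := by
    intro s hs
    have hsu : 0 < s * u := by positivity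
    have h := hfmono u (s * u) hu (by nlinarith)
    have hsup : 0 < (s * u) ^ (q - 1) := Real.rpow_pos_of_pos hsu _
    rw [div_le_div_iff₀ hup hsup] at h
    rw [Real.mul_rpow (by linarith) hu.le] at h
    nlinarith [h, hup]
  have pow_g : ∀ s : ℝ, 1 ≤ s → g (s * u) ≤ g u * s ^ (q - 1) := by
    intro s hs
    have hsu : 0 < s * u := by positivity
    have h := hgmono u (s * u) hu (by nlinarith)
    have hsup : 0 < (s * u) ^ (q - 1) := Real.rpow_pos_of_pos hsu _
    rw [div_le_div_iff₀ hsup hup] at h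
    rw [Real.mul_rpow (by linarith) hu.le] at h
    nlinarith [h, hup]
  have pow_f' : ∀ s : ℝ, 0 < s → s ≤ 1 → f (s * u) ≤ f u * s ^ (q - 1) := by
    intro s hs0 hs
    have hsu : 0 < s * u := by positivity
    have h := hfmono (s * u) u hsu (by nlinarith)
    have hsup : 0 < (s * u) ^ (q - 1) := Real.rpow_pos_of_pos hsu _
    rw [div_le_div_iff₀ hsup hup] at h
    rw [Real.mul_rpow hs0.le hu.le] at h
    nlinarith [h, hup]
  have pow_g' : ∀ s : ℝ, 0 < s → s ≤ 1 → g u * s ^ (q - 1) ≤ g (s * u) := by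
    intro s hs0 hs
    have hsu : 0 < s * u := by positivity
    have h := hgmono (s * u) u hsu (by nlinarith)
    have hsup : 0 < (s * u) ^ (q - 1) := Real.rpow_pos_of_pos hsu _
    rw [div_le_div_iff₀ hup hsup] at h
    rw [Real.mul_rpow hs0.le hu.le] at h
    nlinarith [h, hup]
  -- derivative of φ
  have hφ : ∀ t : ℝ, HasDerivAt φ
      (t * ((f u - g u) * u) - (f (t * u) - g (t * u)) * u) t := by
    intro t
    have hF : HasDerivAt F (f (t * u)) (t * u) :=
      intervalIntegral.integral_hasDerivAt_right (hf.intervalIntegrable _ _)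
        (hf.stronglyMeasurableAtFilter _ _) hf.continuousAt
    have hG : HasDerivAt G (g (t * u)) (t * u) :=
      intervalIntegral.integral_hasDerivAt_right (hg.intervalIntegrable _ _)
        (hg.stronglyMeasurableAtFilter _ _) hg.continuousAt
    have h1 : HasDerivAt (fun t : ℝ => ((t ^ 2 - 1) / 2) * ((f u - g u) * u))
        (t * ((f u - g u) * u)) t := by
      have := (((hasDerivAt_pow 2 t).sub_const 1).div_const 2).mul_const ((f u - g u) * u)
      exact this.congr_deriv (by ring)
    have h2 : HasDerivAt (fun t : ℝ => F (t * u)) (f (t * u) * u) t :=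
      by have := hF.comp t (hasDerivAt_mul_const u); exact this
    have h3 : HasDerivAt (fun t : ℝ => G (t * u)) (g (t * u) * u) t :=
      by have := hG.comp t (hasDerivAt_mul_const u); exact this
    have := ((h1.sub (h2.sub h3)).add_const (F u - G u))
    exact this.congr_deriv (by ring)
  have hdiff : Differentiable ℝ φ := fun t => (hφ t).differentiableAt
  have hderiv : ∀ t : ℝ, deriv φ t = t * ((f u - g u) * u) - (f (t * u) - g (t * u)) * u :=
    fun t => (hφ t).deriv
  -- sign of derivative
  have dpos : ∀ s ∈ Ioo (0:ℝ) 1, 0 ≤ deriv φ s := by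
    intro s hs
    rw [hderiv]
    have h1 := pow_f' s hs.1 hs.2.le
    have h2 := pow_g' s hs.1 hs.2.le
    have hs' : s ^ (q - 1) ≤ s := by
      have h := Real.rpow_le_rpow_of_exponent_ge hs.1 hs.2.le (by linarith : (1:ℝ) ≤ q - 1)
      simpa using h
    have hB : (f u - g u) * s ^ (q - 1) ≤ (f u - g u) * s :=
      mul_le_mul_of_nonneg_left hs' hc.le
    nlinarith [mul_le_mul_of_nonneg_right hB hu.le, h1, h2, hup,
      mul_le_mul_of_nonneg_right (sub_le_sub h1 h2) hu.le]
  have dneg : ∀ s ∈ Ioi (1:ℝ), deriv φ s ≤ 0 := by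
    intro s hs
    rw [hderiv]
    have hs1 : (1:ℝ) ≤ s := le_of_lt hs
    have h1 := pow_f s hs1
    have h2 := pow_g s hs1
    have hs' : s ≤ s ^ (q - 1) := by
      have h := Real.rpow_le_rpow_of_exponent_le hs1 (by linarith : (1:ℝ) ≤ q - 1)
      simpa using h
    have hB : (f u - g u) * s ≤ (f u - g u) * s ^ (q - 1) :=
      mul_le_mul_of_nonneg_left hs' hc.le
    nlinarith [mul_le_mul_of_nonneg_right hB hu.le,
      mul_le_mul_of_nonneg_right (sub_le_sub h1 h2) hu.le]
  -- monotonicity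
  have mono : MonotoneOn φ (Icc 0 1) := by
    apply monotoneOn_of_deriv_nonneg (convex_Icc 0 1) hdiff.continuous.continuousOn
      (hdiff.differentiableOn)
    intro x hx
    rw [interior_Icc] at hx
    exact dpos x hx
  have anti : AntitoneOn φ (Ici 1) := by
    apply antitoneOn_of_deriv_nonpos (convex_Ici 1) hdiff.continuous.continuousOn
      (hdiff.differentiableOn)
    intro x hx
    rw [interior_Ici] at hx
    exact dneg x hx
  have hφ1 : φ 1 = 0 := by
    show ((1:ℝ) ^ 2 - 1) / 2 * ((f u - g u) * u) - (F (1 * u) - G (1 * u)) + (F u - G u) = 0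
    rw [one_mul]
    ring
  refine ⟨hφ1, fun t ht => ?_⟩
  rcases le_or_gt t 1 with h | h
  · have := mono ⟨ht.le, h⟩ ⟨zero_le_one, le_refl 1⟩ h
    linarith [this, hφ1]
  · have := anti (mem_Ici.mpr le_rfl) (mem_Ici.mpr h.le) h.le
    linarith [this, hφ1]
end

section
/- Let F : ℝ³×ℝ → ℝ with F(x,u)/|u|^q → +∞ uniformly in x as |u| → ∞ and F ≥ 0, and let G satisfy 0 ≤ G(x,u) ≤ ε u² + C_ε|u|^q for all ε > 0. If tₙ → +∞ and uₙ → u ≠ 0 in L²∩L^q with uₙ(x) → u(x) a.e., then (1/tₙ²)∫ (F(x,tₙuₙ) − G(x,tₙuₙ)) dx → +∞. -/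
open MeasureTheory Filter
open scoped ENNReal

theorem stmt18 (q : ℝ) (hq : 2 < q)
    (F G : (Fin 3 → ℝ) → ℝ → ℝ)
    (hFmeas : Measurable (Function.uncurry F)) (hGmeas : Measurable (Function.uncurry G))
    (hFc : ∀ x, Continuous (F x)) (hGc : ∀ x, Continuous (G x))
    (hFpos : ∀ x s, 0 ≤ F x s)
    (hFsuper : ∀ M > (0:ℝ), ∃ R > (0:ℝ), ∀ x s, R ≤ |s| → M * |s| ^ q ≤ F x s)
    (hG : ∀ ε > (0:ℝ), ∃ C > (0:ℝ), ∀ x s, |G x s| ≤ ε * s ^ 2 + C * |s| ^ q)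
    (t : ℕ → ℝ) (ht : Tendsto t atTop atTop)
    (u : ℕ → (Fin 3 → ℝ) → ℝ) (u₀ : (Fin 3 → ℝ) → ℝ)
    (hum : ∀ n, Measurable (u n)) (hu₀m : Measurable u₀)
    (hu₀ : ¬ (u₀ =ᵐ[volume] (0 : (Fin 3 → ℝ) → ℝ)))
    (hu₀2 : MemLp u₀ 2 volume) (hu₀q : MemLp u₀ (ENNReal.ofReal q) volume)
    (hL2 : Tendsto (fun n => eLpNorm (u n - u₀) 2 volume) atTop (nhds 0))
    (hLq : Tendsto (fun n => eLpNorm (u n - u₀) (ENNReal.ofReal q) volume) atTop (nhds 0))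
    (hae : ∀ᵐ x ∂volume, Tendsto (fun n => u n x) atTop (nhds (u₀ x)))
    (hFint : ∀ n, Integrable (fun x => F x (t n * u n x)) volume)
    (hGint : ∀ n, Integrable (fun x => G x (t n * u n x)) volume) :
    Tendsto
      (fun n => (1 / (t n) ^ 2) *
        ∫ x : Fin 3 → ℝ, (F x (t n * u n x) - G x (t n * u n x)) ∂volume)
      atTop atTop := by
  have hq0 : (0:ℝ) < q := by linarith
  obtain ⟨C, hC, hGb⟩ := hG 1 one_pos
  obtain ⟨R, hRpos, hFR⟩ := hFsuper (C + 1) (by linarith)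
  set D : ℝ := 1 + (C + 1) * R ^ (q - 2) with hD
  have hRq : (0:ℝ) < R ^ (q - 2) := Real.rpow_pos_of_pos hRpos _
  have hD1 : 1 ≤ D := by nlinarith
  -- pointwise key inequality
  have key : ∀ x s, |s| ^ q - D * s ^ 2 ≤ F x s - G x s := by
    intro x s
    have hGs : G x s ≤ 1 * s ^ 2 + C * |s| ^ q := le_of_abs_le (hGb x s)
    rcases le_or_gt R |s| with h | h
    · have hF' := hFR x s h
      nlinarith [sq_nonneg s, mul_nonneg (mul_nonneg (by linarith : (0:ℝ) ≤ C + 1) hRq.le)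
        (sq_nonneg s)]
    · have habs : |s| ^ q ≤ R ^ (q - 2) * s ^ 2 := by
        rcases eq_or_ne s 0 with rfl | hs
        · simp [Real.zero_rpow hq0.ne']
        · have h0 : 0 < |s| := abs_pos.mpr hs
          have h1 : |s| ^ q = |s| ^ (q - 2) * |s| ^ (2:ℝ) := by
            rw [← Real.rpow_add h0]; ring_nf
          have h2 : |s| ^ (2:ℝ) = s ^ 2 := by
            rw [show (2:ℝ) = ((2:ℕ):ℝ) by norm_num, Real.rpow_natCast, sq_abs]
          rw [h1, h2]
          have h3 : |s| ^ (q - 2) ≤ R ^ (q - 2) :=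
            Real.rpow_le_rpow (abs_nonneg s) h.le (by linarith)
          exact mul_le_mul_of_nonneg_right h3 (sq_nonneg s)
      nlinarith [hFpos x s, mul_le_mul_of_nonneg_left habs (by linarith : (0:ℝ) ≤ C + 1)]
  -- basic facts about the exponent
  have hqe0 : ENNReal.ofReal q ≠ 0 := by
    simp only [ne_eq, ENNReal.ofReal_eq_zero, not_le]; linarith
  have hqet : (ENNReal.ofReal q).toReal = q := ENNReal.toReal_ofReal hq0.le
  -- eventual membership in L² and L^q
  have hmem : ∀ᶠ n in atTop, MemLp (u n) 2 volume ∧ MemLp (u n) (ENNReal.ofReal q) volume ∧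
      eLpNorm (u n - u₀) 2 volume ≤ 1 := by
    have h2 := hL2.eventually_lt_const (by norm_num : (0:ℝ≥0∞) < 1)
    have hq' := hLq.eventually_lt_const (by norm_num : (0:ℝ≥0∞) < 1)
    filter_upwards [h2, hq'] with n h2n hqn
    have hms : AEStronglyMeasurable (u n - u₀) volume :=
      ((hum n).sub hu₀m).aestronglyMeasurable
    have m2 : MemLp (u n - u₀) 2 volume := ⟨hms, h2n.trans_le le_top⟩
    have mq : MemLp (u n - u₀) (ENNReal.ofReal q) volume := ⟨hms, hqn.trans_le le_top⟩
    have heq : u n = (u n - u₀) + u₀ := by funext x; simp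
    refine ⟨?_, ?_, h2n.le⟩
    · rw [heq]; exact m2.add hu₀2
    · rw [heq]; exact mq.add hu₀q
  -- Fatou type lower bound for ∫ |u n|^q
  have humes : ∀ n, Measurable fun x => ENNReal.ofReal (|u n x| ^ q) := fun n =>
    (((Real.continuous_rpow_const hq0.le).measurable.comp (hum n).abs)).ennreal_ofReal
  set I₀ : ℝ≥0∞ := ∫⁻ x, ENNReal.ofReal (|u₀ x| ^ q) ∂volume with hI₀
  have hu₀int : Integrable (fun x => |u₀ x| ^ q) volume := by
    have := hu₀q.integrable_norm_rpow hqe0 ENNReal.ofReal_ne_top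
    simpa [Real.norm_eq_abs, hqet] using this
  have hI₀top : I₀ < ⊤ := by
    rw [hI₀]
    exact (hasFiniteIntegral_iff_ofReal (ae_of_all _ fun x => by positivity)).mp hu₀int.2
  have hI₀pos : 0 < I₀ := by
    rcases (zero_le (a := I₀)).lt_or_eq with h | h
    · exact h
    exfalso
    apply hu₀
    have hmeas0 : Measurable fun x => ENNReal.ofReal (|u₀ x| ^ q) :=
      ((Real.continuous_rpow_const hq0.le).measurable.comp hu₀m.abs).ennreal_ofReal
    have h0 : ∀ᵐ x ∂volume, ENNReal.ofReal (|u₀ x| ^ q) = 0 :=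
      (lintegral_eq_zero_iff hmeas0).mp h.symm
    filter_upwards [h0] with x hx
    simp only [ENNReal.ofReal_eq_zero] at hx
    have h1 : (0:ℝ) ≤ |u₀ x| ^ q := by positivity
    have h2 : |u₀ x| ^ q = 0 := le_antisymm hx h1
    have := (Real.rpow_eq_zero (abs_nonneg _) (by positivity : q ≠ 0)).mp h2
    simpa [abs_eq_zero] using this
  have hliminf : I₀ ≤ liminf (fun n => ∫⁻ x, ENNReal.ofReal (|u n x| ^ q) ∂volume) atTop := by
    refine le_trans (le_of_eq ?_) (lintegral_liminf_le humes)
    refine lintegral_congr_ae ?_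
    filter_upwards [hae] with x hx
    have h1 : Tendsto (fun n => ENNReal.ofReal (|u n x| ^ q)) atTop
        (nhds (ENNReal.ofReal (|u₀ x| ^ q))) := by
      refine (ENNReal.continuous_ofReal.tendsto _).comp ?_
      refine ((Real.continuousAt_rpow_const _ q (Or.inr hq0.le)).tendsto).comp ?_
      exact (continuous_abs.tendsto _).comp hx
    exact h1.liminf_eq.symm
  have hfreq : ∀ᶠ n in atTop, I₀ / 2 < ∫⁻ x, ENNReal.ofReal (|u n x| ^ q) ∂volume :=
    eventually_lt_of_lt_liminf
      (lt_of_lt_of_le (ENNReal.half_lt_self hI₀pos.ne' hI₀top.ne) hliminf)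
  set c : ℝ := (I₀ / 2).toReal with hc
  have hcpos : 0 < c := by
    rw [hc]
    refine ENNReal.toReal_pos ?_ ?_
    · exact (ENNReal.div_pos hI₀pos.ne' (by norm_num)).ne'
    · exact ((ENNReal.half_le_self).trans_lt hI₀top).ne
  set Bb : ℝ := (1 + (eLpNorm u₀ 2 volume).toReal) ^ 2 with hBb
  -- the main eventual lower bound
  have hmain : ∀ᶠ n in atTop,
      t n ^ (q - 2) * c - D * Bb ≤ (1 / (t n) ^ 2) *
        ∫ x : Fin 3 → ℝ, (F x (t n * u n x) - G x (t n * u n x)) ∂volume := by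
    filter_upwards [hmem, hfreq, ht.eventually_ge_atTop 1] with n hmn hfn ht1
    obtain ⟨m2, mq, hsn⟩ := hmn
    have htpos : 0 < t n := lt_of_lt_of_le one_pos ht1
    have int_q : Integrable (fun x => |u n x| ^ q) volume := by
      have := mq.integrable_norm_rpow hqe0 ENNReal.ofReal_ne_top
      simpa [Real.norm_eq_abs, hqet] using this
    have int_2 : Integrable (fun x => (u n x) ^ 2) volume := m2.integrable_sq
    set Qn : ℝ := ∫ x, |u n x| ^ q ∂volume with hQn
    set bn : ℝ := ∫ x, (u n x) ^ 2 ∂volume with hbn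
    -- Qn ≥ c
    have hQc : c ≤ Qn := by
      have hfin : (∫⁻ x, ENNReal.ofReal (|u n x| ^ q) ∂volume) ≠ ⊤ :=
        ((hasFiniteIntegral_iff_ofReal (ae_of_all _ fun x => by positivity)).mp int_q.2).ne
      have heq : Qn = (∫⁻ x, ENNReal.ofReal (|u n x| ^ q) ∂volume).toReal := by
        rw [hQn, integral_eq_lintegral_of_nonneg_ae (ae_of_all _ fun x => by positivity)
          int_q.aestronglyMeasurable]
      rw [heq, hc]
      exact ENNReal.toReal_mono hfin hfn.le
    -- bn ≤ Bb
    have hbB : bn ≤ Bb := by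
      have htri : eLpNorm (u n) 2 volume ≤ eLpNorm (u n - u₀) 2 volume + eLpNorm u₀ 2 volume := by
        have heq : u n = (u n - u₀) + u₀ := by funext x; simp
        calc eLpNorm (u n) 2 volume = eLpNorm ((u n - u₀) + u₀) 2 volume := by rw [← heq]
          _ ≤ _ := eLpNorm_add_le ((hum n).sub hu₀m).aestronglyMeasurable
              hu₀m.aestronglyMeasurable one_le_two
      have hnorm : (eLpNorm (u n) 2 volume).toReal ≤ 1 + (eLpNorm u₀ 2 volume).toReal := by
        have h' : eLpNorm (u n) 2 volume ≤ 1 + eLpNorm u₀ 2 volume :=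
          htri.trans (add_le_add_left hsn _)
        have h'' := ENNReal.toReal_mono
          (by exact (ENNReal.add_lt_top.mpr ⟨ENNReal.one_lt_top, hu₀2.2⟩).ne) h'
        rwa [ENNReal.toReal_add ENNReal.one_ne_top hu₀2.2.ne, ENNReal.toReal_one] at h''
      have hbeq : bn = ((eLpNorm (u n) 2 volume).toReal) ^ 2 := by
        rw [m2.eLpNorm_eq_integral_rpow_norm two_ne_zero ENNReal.ofNat_ne_top]
        have ht2 : (2:ℝ≥0∞).toReal = 2 := by norm_num
        rw [ht2]
        have hnn : (0:ℝ) ≤ ∫ a, ‖u n a‖ ^ (2:ℝ) ∂volume :=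
          integral_nonneg fun a => by positivity
        rw [ENNReal.toReal_ofReal (Real.rpow_nonneg hnn _)]
        rw [← Real.rpow_natCast ((∫ a, ‖u n a‖ ^ (2:ℝ) ∂volume) ^ ((2:ℝ)⁻¹)) 2,
          ← Real.rpow_mul hnn]
        norm_num
        exact hbn
      rw [hbeq, hBb]
      have h0 : 0 ≤ (eLpNorm (u n) 2 volume).toReal := ENNReal.toReal_nonneg
      exact pow_le_pow_left₀ h0 hnorm 2
    -- pointwise inequality for the integrands
    have hpt : ∀ x, t n ^ q * |u n x| ^ q - D * (t n ^ 2 * (u n x) ^ 2)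
        ≤ F x (t n * u n x) - G x (t n * u n x) := by
      intro x
      have hk := key x (t n * u n x)
      have habs : |t n * u n x| ^ q = t n ^ q * |u n x| ^ q := by
        rw [abs_mul, abs_of_pos htpos, Real.mul_rpow htpos.le (abs_nonneg _)]
      rw [habs, mul_pow] at hk
      exact hk
    have hIg : Integrable (fun x => t n ^ q * |u n x| ^ q - D * (t n ^ 2 * (u n x) ^ 2))
        volume := (int_q.const_mul _).sub ((int_2.const_mul _).const_mul _)
    have hle := integral_mono hIg ((hFint n).sub (hGint n)) hpt
    rw [integral_sub (int_q.const_mul _) ((int_2.const_mul _).const_mul _),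
      integral_const_mul, integral_const_mul, integral_const_mul, ← hQn, ← hbn] at hle
    -- now finish with arithmetic
    have hrw : t n ^ q = t n ^ (q - 2) * t n ^ 2 := by
      rw [← Real.rpow_natCast (t n) 2, ← Real.rpow_add htpos]
      norm_num
    have hP : 0 < t n ^ (q - 2) := Real.rpow_pos_of_pos htpos _
    have ht2 : (0:ℝ) < t n ^ 2 := by positivity
    rw [hrw] at hle
    set I : ℝ := ∫ x, (F x (t n * u n x) - G x (t n * u n x)) ∂volume with hIdef
    have h1 : t n ^ (q - 2) * Qn - D * bn ≤ (1 / (t n) ^ 2) * I := by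
      have h2 := mul_le_mul_of_nonneg_left hle
        (le_of_lt (by positivity : (0:ℝ) < 1 / (t n) ^ 2))
      calc t n ^ (q - 2) * Qn - D * bn
          = (1 / (t n) ^ 2) * (t n ^ (q - 2) * t n ^ 2 * Qn - D * (t n ^ 2 * bn)) := by
            field_simp
        _ ≤ (1 / (t n) ^ 2) * I := h2
    have h3 : t n ^ (q - 2) * c ≤ t n ^ (q - 2) * Qn :=
      mul_le_mul_of_nonneg_left hQc hP.le
    have h4 : D * bn ≤ D * Bb := mul_le_mul_of_nonneg_left hbB (by linarith)
    exact (sub_le_sub h3 h4).trans h1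
  -- the lower bound tends to infinity
  have hlim : Tendsto (fun n => t n ^ (q - 2) * c - D * Bb) atTop atTop := by
    have h1 : Tendsto (fun n => t n ^ (q - 2)) atTop atTop :=
      (tendsto_rpow_atTop (by linarith : (0:ℝ) < q - 2)).comp ht
    have h2 : Tendsto (fun n => t n ^ (q - 2) * c) atTop atTop := h1.atTop_mul_const hcpos
    simpa [sub_eq_add_neg] using tendsto_atTop_add_const_right atTop (-(D * Bb)) h2
  exact tendsto_atTop_mono' atTop hmain hlim
end
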